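/- For β ∈ (0,1) define f(ζ;β) := ζ + (8/π)·tan²(πβ/2)·sinh(πζ/2)/( cos(πβ/2) + cosh(πζ/2) ) and h(β) := (4/π)·tan²(πβ/2)·sec(πβ/2), and let Σ̃_β := { (f(ξ + i; β) − i)/h(β) : ξ ∈ ℝ } ⊂ ℂ denote the rescaled free surface. Then sup over z ∈ Σ̃_β of dist( z, C ∪ ℝ ) → 0 as β → 1⁻, where C := { z ∈ ℂ : |z − i| = 1 } is the unit circle centered at i and ℝ is the real axis in ℂ. -/

import Mathlib

set_option maxHeartbeats 2000000


open Set

/-- The conformal map of the explicit zero-gravity solitary wave of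
Crowdy–Nelson–Krishnamurthy. -/
noncomputable def fCNK (β : ℝ) (z : ℂ) : ℂ :=
  z + ((8 / Real.pi * Real.tan (Real.pi * β / 2) ^ 2 : ℝ) : ℂ) *
    Complex.sinh ((Real.pi : ℂ) * z / 2) /
      (((Real.cos (Real.pi * β / 2) : ℝ) : ℂ) + Complex.cosh ((Real.pi : ℂ) * z / 2))

/-- The normalization `h(β) = (4/π)·tan²(πβ/2)·sec(πβ/2)`. -/
noncomputable def hCNK (β : ℝ) : ℝ :=
  4 / Real.pi * Real.tan (Real.pi * β / 2) ^ 2 / Real.cos (Real.pi * β / 2)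

theorem statement19 :
    ∀ ε > 0, ∃ δ > 0, ∀ β ∈ Set.Ioo (0 : ℝ) 1, 1 - δ < β →
      ∀ ξ : ℝ,
        Metric.infDist ((fCNK β ((ξ : ℂ) + Complex.I) - Complex.I) / ((hCNK β : ℝ) : ℂ))
          (Metric.sphere (Complex.I) 1 ∪ {z : ℂ | z.im = 0}) < ε := by
  intro ε hε
  refine ⟨min (1/8) (Real.sqrt ε / 4), lt_min (by norm_num) (by positivity), ?_⟩
  intro β hβ hβδ ξ
  obtain ⟨hβ0, hβ1⟩ := hβ
  have hπ := Real.pi_pos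
  have hπ4 : Real.pi < 3.15 := Real.pi_lt_d2
  obtain ⟨c, hc⟩ : ∃ c, Real.cos (Real.pi * β / 2) = c := ⟨_, rfl⟩
  obtain ⟨s, hs⟩ : ∃ s, Real.sinh (Real.pi * ξ / 2) = s := ⟨_, rfl⟩
  obtain ⟨k, hk⟩ : ∃ k, Real.cosh (Real.pi * ξ / 2) = k := ⟨_, rfl⟩
  have hc0 : 0 < c := hc ▸ Real.cos_pos_of_mem_Ioo ⟨by nlinarith, by nlinarith⟩
  -- smallness of c
  have hδβ : 1 - β < min (1/8) (Real.sqrt ε / 4) := by linarith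
  have hδ0 : 0 < min (1/8 : ℝ) (Real.sqrt ε / 4) := lt_min (by norm_num) (by positivity)
  have hcle : c ≤ Real.pi * (1 - β) / 2 := by
    have h1 : Real.sin (Real.pi / 2 - Real.pi * β / 2) = c := by
      rw [Real.sin_pi_div_two_sub, hc]
    have h2 : Real.sin (Real.pi / 2 - Real.pi * β / 2) ≤ Real.pi / 2 - Real.pi * β / 2 :=
      Real.sin_le (by nlinarith)
    nlinarith
  have hc2δ : c < 2 * min (1/8 : ℝ) (Real.sqrt ε / 4) := by nlinarith
  have hc14 : c < 1/4 := by
    have := min_le_left (1/8 : ℝ) (Real.sqrt ε / 4); linarith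
  have hcε : 4 * c ^ 2 < ε := by
    have h1 := min_le_right (1/8 : ℝ) (Real.sqrt ε / 4)
    have h2 : c < Real.sqrt ε / 2 := by linarith
    nlinarith [Real.sq_sqrt hε.le, Real.sqrt_nonneg ε]
  -- basic facts
  have hsin0 : 0 < Real.sin (Real.pi * β / 2) := by
    apply Real.sin_pos_of_pos_of_lt_pi <;> nlinarith
  have hq : Real.tan (Real.pi * β / 2) ^ 2 = (1 - c ^ 2) / c ^ 2 := by
    rw [Real.tan_eq_sin_div_cos, div_pow, Real.sin_sq, hc]
  have hc1 : c ^ 2 < 1 := by nlinarith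
  have hval : hCNK β = 4 * (1 - c ^ 2) / (Real.pi * c ^ 3) := by
    have h1c : (1:ℝ) - c ^ 2 ≠ 0 := by nlinarith
    rw [hCNK, hq, hc]; field_simp
  have hh0 : 0 < hCNK β := by
    rw [hval]; apply div_pos; nlinarith; positivity
  have hk1 : (1:ℝ) ≤ k := hk ▸ Real.one_le_cosh _
  have hs2 : s ^ 2 = k ^ 2 - 1 := by
    have := Real.cosh_sq (Real.pi * ξ / 2); rw [hk, hs] at this; linarith
  have hu0 : 0 < c ^ 2 + s ^ 2 := by positivity
  -- the conformal map at ξ + i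
  have e1 : (Real.pi : ℂ) * ((ξ:ℂ) + Complex.I) / 2
      = ((Real.pi * ξ / 2 : ℝ) : ℂ) + ((Real.pi / 2 : ℝ) : ℂ) * Complex.I := by
    push_cast; ring
  have esinh : Complex.sinh ((Real.pi : ℂ) * ((ξ:ℂ) + Complex.I) / 2) = (k : ℂ) * Complex.I := by
    rw [e1, Complex.sinh_add, Complex.sinh_mul_I, Complex.cosh_mul_I,
      ← Complex.ofReal_sinh, ← Complex.ofReal_cosh, ← Complex.ofReal_cos, ← Complex.ofReal_sin,
      Real.cos_pi_div_two, Real.sin_pi_div_two, hs, hk]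
    simp
  have ecosh : Complex.cosh ((Real.pi : ℂ) * ((ξ:ℂ) + Complex.I) / 2) = (s : ℂ) * Complex.I := by
    rw [e1, Complex.cosh_add, Complex.sinh_mul_I, Complex.cosh_mul_I,
      ← Complex.ofReal_sinh, ← Complex.ofReal_cosh, ← Complex.ofReal_cos, ← Complex.ofReal_sin,
      Real.cos_pi_div_two, Real.sin_pi_div_two, hs, hk]
    simp
  have hden : ((c:ℂ) + (s:ℂ) * Complex.I) ≠ 0 := by
    intro h
    have := congrArg Complex.re h
    simp at this
    exact absurd this (ne_of_gt hc0)
  have hhC : ((hCNK β : ℝ) : ℂ) ≠ 0 := by exact_mod_cast ne_of_gt hh0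
  have huC : ((c:ℂ)^2 + (s:ℂ)^2) ≠ 0 := by
    have : (((c^2 + s^2 : ℝ)) : ℂ) ≠ 0 := by exact_mod_cast ne_of_gt hu0
    push_cast at this; exact this
  have ediv : ((k:ℂ) * Complex.I)/((c:ℂ)+(s:ℂ)*Complex.I)
      = (((k*s/(c^2+s^2)):ℝ):ℂ) + (((k*c/(c^2+s^2)):ℝ):ℂ)*Complex.I := by
    rw [div_eq_iff hden]
    push_cast
    field_simp
    linear_combination (-((k:ℂ)*(c:ℂ)*(s:ℂ))) * Complex.I_sq
  have znum : fCNK β ((ξ:ℂ)+Complex.I) = (ξ:ℂ) + Complex.I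
      + ((8/Real.pi * ((1-c^2)/c^2) :ℝ):ℂ)
        * ((((k*s/(c^2+s^2)):ℝ):ℂ) + (((k*c/(c^2+s^2)):ℝ):ℂ)*Complex.I) := by
    rw [fCNK, esinh, ecosh, hc, hq, mul_div_assoc, ediv]
  have zeq : (fCNK β ((ξ:ℂ) + Complex.I) - Complex.I) / ((hCNK β : ℝ) : ℂ)
      = ((ξ / hCNK β + 2 * c * k * s / (c ^ 2 + s ^ 2) : ℝ) : ℂ)
        + ((2 * c ^ 2 * k / (c ^ 2 + s ^ 2) : ℝ) : ℂ) * Complex.I := by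
    have h4 : (4:ℝ) - c ^ 2 * 4 ≠ 0 := by nlinarith
    have h4' : (4:ℝ) * (1 - c ^ 2) ≠ 0 := by nlinarith
    have h1c : (1:ℝ) - c ^ 2 ≠ 0 := by nlinarith
    rw [znum, div_eq_iff hhC]
    apply Complex.ext <;>
      simp only [Complex.add_re, Complex.add_im, Complex.sub_re, Complex.sub_im,
        Complex.mul_re, Complex.mul_im, Complex.ofReal_re, Complex.ofReal_im,
        Complex.I_re, Complex.I_im, mul_zero, zero_mul, mul_one, sub_zero,
        add_zero, zero_add, zero_sub, sub_self, neg_zero, neg_neg] <;>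
      rw [hval] <;> field_simp [h4, h4', h1c, hπ.ne', hc0.ne', hu0.ne'] <;> ring
  rw [zeq]
  obtain ⟨X, hX⟩ : ∃ X, ξ / hCNK β + 2 * c * k * s / (c ^ 2 + s ^ 2) = X := ⟨_, rfl⟩
  obtain ⟨Y, hY⟩ : ∃ Y, 2 * c ^ 2 * k / (c ^ 2 + s ^ 2) = Y := ⟨_, rfl⟩
  rw [hX, hY]
  have hY0 : 0 ≤ Y := by rw [← hY]; positivity
  by_cases hck : 1 ≤ c * k
  · -- near the real axis
    have hmem : ((X : ℝ) : ℂ) ∈ (Metric.sphere (Complex.I) 1 ∪ {z : ℂ | z.im = 0}) := by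
      right
      simp [Set.mem_setOf_eq]
    refine lt_of_le_of_lt (le_trans (Metric.infDist_le_dist_of_mem hmem) ?_) hcε
    have hdist : dist (((X : ℝ) : ℂ) + ((Y : ℝ) : ℂ) * Complex.I) ((X : ℝ) : ℂ) = Y := by
      rw [Complex.dist_eq]
      have h1 : ((X : ℝ) : ℂ) + ((Y : ℝ) : ℂ) * Complex.I - ((X : ℝ) : ℂ)
          = ((Y : ℝ) : ℂ) * Complex.I := by ring
      rw [h1]
      simp [abs_of_nonneg hY0]
    rw [hdist, ← hY, div_le_iff₀ hu0]
    have hk4 : 4 < k := by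
      nlinarith only [hck, hc14, hc0, hk1, mul_pos (show (0:ℝ) < 1/4 - c by linarith) (show (0:ℝ) < k by linarith)]
    have hA : (0:ℝ) ≤ 2 * k ^ 2 - k - 2 := by nlinarith only [hk4]
    nlinarith only [mul_nonneg (sq_nonneg c) hA, sq_nonneg (c ^ 2), hs2, sq_nonneg c]
  · push_neg at hck
    -- |ξ| is small
    have hξ : |ξ| ≤ 4 / (Real.pi * c) := by
      have habs : |Real.pi * ξ / 2| = Real.pi * |ξ| / 2 := by
        rw [abs_div, abs_mul, abs_of_pos hπ]; norm_num
      have hexp : Real.exp (Real.pi * |ξ| / 2) ≤ 2 * k := by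
        rw [← habs, ← hk, ← Real.cosh_abs, Real.cosh_eq]
        have := Real.exp_pos (-|Real.pi * ξ / 2|)
        linarith
      have h2k : 2 * k ≤ 2 / c := by
        rw [le_div_iff₀ hc0]; nlinarith
      have hlog : Real.pi * |ξ| / 2 ≤ Real.log (2 / c) := by
        rw [Real.le_log_iff_exp_le (by positivity)]
        linarith
      have hlog2 : Real.log (2 / c) ≤ 2 / c := by
        have := Real.log_le_sub_one_of_pos (show (0:ℝ) < 2 / c by positivity)
        linarith
      have h3 : Real.pi * |ξ| / 2 * c ≤ 2 := (le_div_iff₀ hc0).mp (le_trans hlog hlog2)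
      rw [le_div_iff₀ (by positivity : (0:ℝ) < Real.pi * c)]
      nlinarith only [h3]
    have hξh : |ξ| / hCNK β ≤ 2 * c ^ 2 := by
      rw [div_le_iff₀ hh0, hval]
      have key : 2 * c ^ 2 * (4 * (1 - c ^ 2) / (Real.pi * c ^ 3))
          = 8 * (1 - c ^ 2) / (Real.pi * c) := by
        field_simp; ring
      rw [key]
      refine le_trans hξ ?_
      rw [div_le_div_iff₀ (by positivity) (by positivity)]
      have hP := mul_pos hπ hc0
      have h8 : (0:ℝ) ≤ 4 - 8 * c ^ 2 := by nlinarith only [hc14, hc0]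
      nlinarith only [mul_nonneg hP.le h8]
    -- near the circle
    obtain ⟨x₀, hx₀⟩ : ∃ x₀, 2 * c * k * s / (c ^ 2 + s ^ 2) = x₀ := ⟨_, rfl⟩
    obtain ⟨w, hw⟩ : ∃ w : ℂ, ((x₀:ℝ):ℂ) + ((Y - 1 : ℝ):ℂ) * Complex.I = w := ⟨_, rfl⟩
    obtain ⟨r, hr⟩ : ∃ r, ‖w‖ = r := ⟨_, rfl⟩
    have hrn : 0 ≤ r := hr ▸ norm_nonneg w
    have hnsq : Complex.normSq w = x₀ ^ 2 + (Y - 1) ^ 2 := by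
      rw [← hw, Complex.normSq_apply]
      simp
      ring
    obtain ⟨D, hD⟩ : ∃ D, 4 * c ^ 2 * k * (k - 1) / (c ^ 2 + s ^ 2) = D := ⟨_, rfl⟩
    have hr2 : r ^ 2 = 1 + D := by
      rw [← hr, Complex.sq_norm, hnsq, ← hx₀, ← hY, ← hD]
      field_simp
      ring
    have hD0 : 0 ≤ D := by
      rw [← hD]
      apply div_nonneg _ (le_of_lt hu0)
      have h1 : 0 ≤ k * (k - 1) := mul_nonneg (by linarith) (by linarith)
      nlinarith only [mul_nonneg (sq_nonneg c) h1]
    have hDub : D ≤ 4 * c ^ 2 := by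
      rw [← hD, div_le_iff₀ hu0]
      have h2 : k * (k - 1) ≤ c ^ 2 + s ^ 2 := by nlinarith only [hs2, hk1, sq_nonneg c]
      nlinarith only [mul_le_mul_of_nonneg_left h2 (by positivity : (0:ℝ) ≤ 4 * c ^ 2)]
    have hr1 : 1 ≤ r := by
      nlinarith only [hrn, hr2, hD0]
    have hrub : r ≤ 1 + 2 * c ^ 2 := by
      nlinarith only [hr2, hDub, hr1, sq_nonneg c, hrn]
    have hr0 : (0:ℝ) < r := by linarith
    have hrC : ((r:ℝ):ℂ) ≠ 0 := by exact_mod_cast ne_of_gt hr0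
    have hpmem : Complex.I + w / ((r:ℝ):ℂ)
        ∈ (Metric.sphere (Complex.I) 1 ∪ {z : ℂ | z.im = 0}) := by
      left
      simp only [Metric.mem_sphere, Complex.dist_eq]
      have h1 : Complex.I + w / ((r:ℝ):ℂ) - Complex.I = w / ((r:ℝ):ℂ) := by ring
      rw [h1, norm_div, Complex.norm_real, Real.norm_eq_abs, abs_of_pos hr0, hr, div_self (ne_of_gt hr0)]
    refine lt_of_le_of_lt (le_trans (Metric.infDist_le_dist_of_mem hpmem) ?_) hcε
    have hzp : ((X : ℝ) : ℂ) + ((Y : ℝ) : ℂ) * Complex.I - (Complex.I + w / ((r:ℝ):ℂ))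
        = ((ξ / hCNK β : ℝ):ℂ) + w * (1 - (((r:ℝ):ℂ))⁻¹) := by
      rw [← hw, ← hX, ← hx₀]
      push_cast
      ring
    rw [Complex.dist_eq, hzp]
    have hb1 : ‖((ξ / hCNK β : ℝ):ℂ) + w * (1 - (((r:ℝ):ℂ))⁻¹)‖
        ≤ |ξ / hCNK β| + r * (1 - r⁻¹) := by
      refine le_trans (norm_add_le _ _) ?_
      rw [Complex.norm_real, Real.norm_eq_abs, norm_mul]
      have h1 : (1 - (((r:ℝ):ℂ))⁻¹) = (((1 - r⁻¹ : ℝ)):ℂ) := by push_cast; ring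
      have h2 : |1 - r⁻¹| = 1 - r⁻¹ :=
        abs_of_nonneg (by rw [sub_nonneg]; exact inv_le_one_of_one_le₀ hr1)
      rw [h1, Complex.norm_real, Real.norm_eq_abs, hr, h2]
    refine le_trans hb1 ?_
    have e : r * (1 - r⁻¹) = r - 1 := by field_simp
    have habs2 : |ξ / hCNK β| = |ξ| / hCNK β := by rw [abs_div, abs_of_pos hh0]
    rw [e, habs2]
    linarith [hξh, hrub]
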